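/- Let F be a spanning forest of K_n and let H_1, H_2 be forests of K_n that are F-disjoint (no vertex of H_1 lies in the same connected component of F as any vertex of H_2). Let T be uniformly random among spanning trees of K_n containing F. Then P(H_1 ⊆ T and H_2 ⊆ T) = P(H_1 ⊆ T)·P(H_2 ⊆ T), i.e., the events A_{H_1} and A_{H_2} are independent. -/

import Mathlib

open SimpleGraph Finset

namespace ForestIndep

variable {V : Type*}

/-- Walks in `G ⊔ H` starting in a `G`-closed set `B` avoiding `H.support` stay in `B`
and use only `G`-edges. -/
lemma walk_closed {G H : SimpleGraph V} {B : Set V}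
    (hB : ∀ ⦃x y⦄, G.Adj x y → x ∈ B → y ∈ B)
    (hH : ∀ ⦃x⦄, x ∈ H.support → x ∉ B)
    {v w : V} (p : (G ⊔ H).Walk v w) (hv : v ∈ B) :
    w ∈ B ∧ ∀ e ∈ p.edges, e ∈ G.edgeSet := by
  induction p with
  | nil => exact ⟨hv, by simp⟩
  | @cons a b c h q ih =>
    have hG : G.Adj a b := by
      rcases (sup_adj G H a b).mp h with h' | h'
      · exact h'
      · exact absurd hv (hH ⟨_, h'⟩)
    obtain ⟨hw, he⟩ := ih (hB hG hv)
    refine ⟨hw, ?_⟩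
    intro e he'
    rw [Walk.edges_cons, List.mem_cons] at he'
    rcases he' with rfl | he'
    · exact hG
    · exact he e he'

lemma reachable_sup_closed {G H : SimpleGraph V} {B : Set V}
    (hB : ∀ ⦃x y⦄, G.Adj x y → x ∈ B → y ∈ B)
    (hH : ∀ ⦃x⦄, x ∈ H.support → x ∉ B)
    {v w : V} (hv : v ∈ B) :
    (G ⊔ H).Reachable v w ↔ G.Reachable v w := by
  constructor
  · rintro ⟨p⟩
    exact ⟨p.transfer G (walk_closed hB hH p hv).2⟩
  · exact fun h => h.mono le_sup_left

lemma mem_closed_of_reachable {G : SimpleGraph V} {B : Set V}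
    (hB : ∀ ⦃x y⦄, G.Adj x y → x ∈ B → y ∈ B)
    {v w : V} (hv : v ∈ B) (h : G.Reachable v w) : w ∈ B := by
  obtain ⟨p⟩ := h
  induction p with
  | nil => exact hv
  | cons h q ih => exact ih (hB h hv)

lemma acyclic_sup_closed {G H : SimpleGraph V} {B : Set V}
    (hB : ∀ ⦃x y⦄, G.Adj x y → x ∈ B → y ∈ B)
    (hH : ∀ ⦃x⦄, x ∈ H.support → x ∉ B)
    (hG : G.IsAcyclic) {v : V} (hv : v ∈ B) (c : (G ⊔ H).Walk v v) : ¬c.IsCycle := by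
  intro hc
  exact hG (c.transfer G (walk_closed hB hH c hv).2) (hc.transfer _)

lemma isAcyclic_anti {G H : SimpleGraph V} (h : G ≤ H) (hH : H.IsAcyclic) : G.IsAcyclic := by
  intro v c hc
  exact hH (c.transfer H (fun e he => edgeSet_mono h (c.edges_subset_edgeSet he)))
    (hc.transfer _)



variable {V : Type*}

/-- A single-edge graph. -/
def eg (u v : V) : SimpleGraph V := fromEdgeSet {s(u, v)}

lemma eg_adj {u v x y : V} : (eg u v).Adj x y ↔ s(x, y) = s(u, v) ∧ x ≠ y := by
  simp [eg, fromEdgeSet_adj]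

lemma reachable_sup_eg {G : SimpleGraph V} {u v w x : V}
    (h : (G ⊔ eg u v).Reachable w x) :
    G.Reachable w x ∨ (G.Reachable w u ∧ G.Reachable v x) ∨
      (G.Reachable w v ∧ G.Reachable u x) := by
  obtain ⟨p⟩ := h
  induction p with
  | nil => exact Or.inl (Reachable.refl _)
  | @cons a b c h q ih =>
    rcases (sup_adj _ _ _ _).mp h with h' | h'
    · have hab : G.Reachable a b := h'.reachable
      rcases ih with h1 | ⟨h1, h2⟩ | ⟨h1, h2⟩
      · exact Or.inl (hab.trans h1)
      · exact Or.inr (Or.inl ⟨hab.trans h1, h2⟩)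
      · exact Or.inr (Or.inr ⟨hab.trans h1, h2⟩)
    · obtain ⟨he, hne⟩ := eg_adj.mp h'
      rw [Sym2.eq_iff] at he
      rcases he with ⟨rfl, rfl⟩ | ⟨rfl, rfl⟩
      · -- a = u, b = v
        rcases ih with h1 | ⟨h1, h2⟩ | ⟨h1, h2⟩
        · exact Or.inr (Or.inl ⟨Reachable.refl _, h1⟩)
        · exact Or.inl (h1.symm.trans h2)
        · exact Or.inl h2
      · -- a = v, b = u
        rcases ih with h1 | ⟨h1, h2⟩ | ⟨h1, h2⟩
        · exact Or.inr (Or.inr ⟨Reachable.refl _, h1⟩)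
        · exact Or.inl h2
        · exact Or.inl (h1.symm.trans h2)



open scoped Classical

variable {V : Type*} [Fintype V]

/-- The connected component of `v` as a `Finset`. -/
noncomputable def compSet (G : SimpleGraph V) (v : V) : Finset V :=
  Finset.univ.filter (fun w => G.Reachable v w)

/-- The set of connected components (as vertex sets). -/
noncomputable def comps (G : SimpleGraph V) : Finset (Finset V) :=
  Finset.univ.image (compSet G)

lemma mem_compSet {G : SimpleGraph V} {v w : V} :
    w ∈ compSet G v ↔ G.Reachable v w := by simp [compSet]

lemma self_mem_compSet {G : SimpleGraph V} (v : V) : v ∈ compSet G v :=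
  mem_compSet.mpr (Reachable.refl _)

lemma compSet_eq_iff {G : SimpleGraph V} {u v : V} :
    compSet G u = compSet G v ↔ G.Reachable u v := by
  constructor
  · intro h
    have := self_mem_compSet (G := G) v
    rw [← h] at this
    exact mem_compSet.mp this
  · intro h
    ext w
    simp only [mem_compSet]
    exact ⟨fun h' => h.symm.trans h', fun h' => h.trans h'⟩

lemma compSet_mem_comps (G : SimpleGraph V) (v : V) : compSet G v ∈ comps G :=
  Finset.mem_image_of_mem _ (Finset.mem_univ v)

lemma comps_nonempty_elt {G : SimpleGraph V} {s : Finset V} (hs : s ∈ comps G) :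
    ∃ v, s = compSet G v ∧ v ∈ s := by
  obtain ⟨v, _, rfl⟩ := Finset.mem_image.mp hs
  exact ⟨v, rfl, self_mem_compSet v⟩

lemma card_compSet_pos {G : SimpleGraph V} {s : Finset V} (hs : s ∈ comps G) : 0 < s.card := by
  obtain ⟨v, _, hv⟩ := comps_nonempty_elt hs
  exact Finset.card_pos.mpr ⟨v, hv⟩

lemma mem_compSet_iff_eq {G : SimpleGraph V} {u v : V} :
    v ∈ compSet G u ↔ compSet G u = compSet G v := by
  rw [mem_compSet, compSet_eq_iff]

/-- Components partition: summing any component-constant function. -/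
lemma sum_comps_card (G : SimpleGraph V) :
    ∑ s ∈ comps G, s.card = Fintype.card V := by
  rw [← Finset.card_univ, Finset.card_eq_sum_card_fiberwise
    (f := compSet G) (t := comps G) (fun x _ => compSet_mem_comps G x)]
  refine Finset.sum_congr rfl (fun s hs => ?_)
  congr 1
  obtain ⟨v, rfl, -⟩ := comps_nonempty_elt hs
  ext w
  simp only [Finset.mem_filter, Finset.mem_univ, true_and]
  rw [eq_comm, ← mem_compSet_iff_eq]

lemma comps_pairwise_disjoint {G : SimpleGraph V} {s t : Finset V}
    (hs : s ∈ comps G) (ht : t ∈ comps G) (hst : s ≠ t) : ∀ x ∈ s, x ∉ t := by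
  obtain ⟨u, rfl, -⟩ := comps_nonempty_elt hs
  obtain ⟨v, rfl, -⟩ := comps_nonempty_elt ht
  intro x hx hx'
  exact hst (((mem_compSet_iff_eq.mp hx)).trans (mem_compSet_iff_eq.mp hx').symm)



open scoped Classical

section AddEdge

variable {V : Type*} [Fintype V] {G : SimpleGraph V} {u v : V}

lemma adj_sup_eg (hne : u ≠ v) : (G ⊔ eg u v).Adj u v :=
  (sup_adj _ _ _ _).mpr (Or.inr (eg_adj.mpr ⟨rfl, hne⟩))

lemma compSet_sup_eg_of_unreachable {w : V} (hu : ¬G.Reachable w u) (hv : ¬G.Reachable w v) :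
    compSet (G ⊔ eg u v) w = compSet G w := by
  ext x
  simp only [mem_compSet]
  constructor
  · intro h
    rcases reachable_sup_eg h with h1 | ⟨h1, h2⟩ | ⟨h1, h2⟩
    · exact h1
    · exact absurd h1 hu
    · exact absurd h1 hv
  · exact fun h => h.mono le_sup_left

lemma compSet_sup_eg (hne : ¬G.Reachable u v) :
    compSet (G ⊔ eg u v) u = compSet G u ∪ compSet G v := by
  have hne' : u ≠ v := fun h => hne (h ▸ Reachable.refl _)
  ext x
  simp only [mem_compSet, Finset.mem_union]
  constructor
  · intro h
    rcases reachable_sup_eg h with h1 | ⟨h1, h2⟩ | ⟨h1, h2⟩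
    · exact Or.inl h1
    · exact Or.inr h2
    · exact absurd h1 hne
  · rintro (h | h)
    · exact h.mono le_sup_left
    · exact ((adj_sup_eg hne').reachable).trans (h.mono le_sup_left)

lemma comps_sup_eg (hne : ¬G.Reachable u v) :
    comps (G ⊔ eg u v) =
      insert (compSet G u ∪ compSet G v)
        (((comps G).erase (compSet G u)).erase (compSet G v)) := by
  have hne' : u ≠ v := fun h => hne (h ▸ Reachable.refl _)
  ext s
  constructor
  · intro hs
    obtain ⟨w, -, rfl⟩ := Finset.mem_image.mp hs
    by_cases hu : G.Reachable w u
    · have : compSet (G ⊔ eg u v) w = compSet (G ⊔ eg u v) u :=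
        compSet_eq_iff.mpr (hu.mono le_sup_left)
      rw [this, compSet_sup_eg hne]
      exact Finset.mem_insert_self _ _
    · by_cases hv : G.Reachable w v
      · have : compSet (G ⊔ eg u v) w = compSet (G ⊔ eg u v) u :=
          compSet_eq_iff.mpr ((hv.mono le_sup_left).trans
            ((adj_sup_eg hne').reachable.mono (le_refl _)).symm)
        rw [this, compSet_sup_eg hne]
        exact Finset.mem_insert_self _ _
      · rw [compSet_sup_eg_of_unreachable hu hv]
        refine Finset.mem_insert_of_mem ?_
        rw [Finset.mem_erase, Finset.mem_erase]
        refine ⟨fun h => hv (compSet_eq_iff.mp h), fun h => hu (compSet_eq_iff.mp h),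
          compSet_mem_comps G w⟩
  · intro hs
    rcases Finset.mem_insert.mp hs with rfl | hs
    · rw [← compSet_sup_eg hne]
      exact compSet_mem_comps _ u
    · rw [Finset.mem_erase, Finset.mem_erase] at hs
      obtain ⟨hsv, hsu, hs⟩ := hs
      obtain ⟨w, rfl, -⟩ := comps_nonempty_elt hs
      rw [← compSet_sup_eg_of_unreachable (fun h => hsu (compSet_eq_iff.mpr h))
        (fun h => hsv (compSet_eq_iff.mpr h))]
      exact compSet_mem_comps _ w

lemma compSet_ne_of_unreachable (hne : ¬G.Reachable u v) : compSet G u ≠ compSet G v :=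
  fun h => hne (compSet_eq_iff.mp h)

lemma union_not_mem_erase (hne : ¬G.Reachable u v) :
    compSet G u ∪ compSet G v ∉ ((comps G).erase (compSet G u)).erase (compSet G v) := by
  intro h
  rw [Finset.mem_erase, Finset.mem_erase] at h
  obtain ⟨-, hsu, hs⟩ := h
  exact comps_pairwise_disjoint hs (compSet_mem_comps G u) hsu u
    (Finset.mem_union_left _ (self_mem_compSet u)) (self_mem_compSet u)

lemma comps_card_sup_eg (hne : ¬G.Reachable u v) :
    (comps (G ⊔ eg u v)).card + 1 = (comps G).card := by
  rw [comps_sup_eg hne, Finset.card_insert_of_notMem (union_not_mem_erase hne),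
    Finset.card_erase_of_mem, Finset.card_erase_of_mem (compSet_mem_comps G u)]
  · have h2 : 2 ≤ (comps G).card := by
      have := Finset.card_le_card (Finset.insert_subset
        (compSet_mem_comps G u) (Finset.singleton_subset_iff.mpr (compSet_mem_comps G v)))
      rwa [Finset.card_insert_of_notMem (by
        simpa using compSet_ne_of_unreachable hne), Finset.card_singleton] at this
    omega
  · exact Finset.mem_erase.mpr ⟨(compSet_ne_of_unreachable hne).symm, compSet_mem_comps G v⟩

lemma card_union_compSet (hne : ¬G.Reachable u v) :
    (compSet G u ∪ compSet G v).card = (compSet G u).card + (compSet G v).card := by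
  rw [Finset.card_union_of_disjoint]
  rw [Finset.disjoint_left]
  intro x hx hx'
  exact hne ((mem_compSet.mp hx).trans (mem_compSet.mp hx').symm)

lemma prod_comps_sup_eg (hne : ¬G.Reachable u v) :
    (∏ s ∈ comps (G ⊔ eg u v), (s.card : ℕ)) * ((compSet G u).card * (compSet G v).card) =
      (∏ s ∈ comps G, (s.card : ℕ)) * ((compSet G u).card + (compSet G v).card) := by
  have hv_mem : compSet G v ∈ (comps G).erase (compSet G u) :=
    Finset.mem_erase.mpr ⟨(compSet_ne_of_unreachable hne).symm, compSet_mem_comps G v⟩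
  have h1 : (∏ s ∈ comps G, (s.card : ℕ)) =
      (compSet G u).card * ((compSet G v).card *
        ∏ s ∈ ((comps G).erase (compSet G u)).erase (compSet G v), (s.card : ℕ)) := by
    rw [Finset.mul_prod_erase _ _ hv_mem, Finset.mul_prod_erase _ _ (compSet_mem_comps G u)]
  have h2 : (∏ s ∈ comps (G ⊔ eg u v), (s.card : ℕ)) =
      ((compSet G u).card + (compSet G v).card) *
        ∏ s ∈ ((comps G).erase (compSet G u)).erase (compSet G v), (s.card : ℕ) := by
    rw [comps_sup_eg hne, Finset.prod_insert (union_not_mem_erase hne),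
      card_union_compSet hne]
  rw [h1, h2]; ring

lemma isAcyclic_sup_eg (hG : G.IsAcyclic) (hne : ¬G.Reachable u v) :
    (G ⊔ eg u v).IsAcyclic := by
  have hne' : u ≠ v := fun h => hne (h ▸ Reachable.refl _)
  intro w c hc
  by_cases he : s(u, v) ∈ c.edges
  · have : (G ⊔ eg u v).Adj u v ∧ ((G ⊔ eg u v) \ fromEdgeSet {s(u, v)}).Reachable u v :=
      adj_and_reachable_delete_edges_iff_exists_cycle.mpr ⟨w, c, hc, he⟩
    refine hne (this.2.mono ?_)
    intro x y hxy
    rw [sdiff_adj, sup_adj] at hxy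
    rcases hxy.1 with h' | h'
    · exact h'
    · exact absurd h' hxy.2
  · refine hG (c.transfer G ?_) (hc.transfer _)
    intro e hee
    have := c.edges_subset_edgeSet hee
    rw [edgeSet_sup] at this
    rcases this with h' | h'
    · exact h'
    · exfalso
      rw [eg, edgeSet_fromEdgeSet] at h'
      obtain ⟨h1, -⟩ := h'
      rw [Set.mem_singleton_iff] at h1
      exact he (h1 ▸ hee)

end AddEdge


open scoped Classical


open scoped Classical

section Count

variable {V : Type*} [Fintype V] [DecidableEq V]

lemma edgeSet_sdiff_singleton (G : SimpleGraph V) (e : Sym2 V) :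
    (G \ fromEdgeSet {e}).edgeSet = G.edgeSet \ {e} := by
  rw [edgeSet_sdiff, edgeSet_fromEdgeSet, edgeSet_sdiff_sdiff_isDiag]

lemma sdiff_sup_eg {G : SimpleGraph V} {u v : V} (huv : G.Adj u v) :
    (G \ fromEdgeSet {s(u, v)}) ⊔ eg u v = G := by
  ext x y
  simp only [sup_adj, sdiff_adj, fromEdgeSet_adj, eg, Set.mem_singleton_iff]
  constructor
  · rintro (⟨h, -⟩ | ⟨h, hne⟩)
    · exact h
    · rw [Sym2.eq_iff] at h
      rcases h with ⟨rfl, rfl⟩ | ⟨rfl, rfl⟩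
      · exact huv
      · exact huv.symm
  · intro h
    by_cases hxy : s(x, y) = s(u, v)
    · exact Or.inr ⟨hxy, h.ne⟩
    · exact Or.inl ⟨h, fun hh => hxy hh.1⟩

lemma ncard_edgeSet (H : SimpleGraph V) [inst : Fintype H.edgeSet] :
    H.edgeFinset.card = H.edgeSet.ncard := by
  rw [← Set.ncard_coe_finset, coe_edgeFinset]

lemma comps_card_bot : (comps (⊥ : SimpleGraph V)).card = Fintype.card V := by
  have h1 : ∀ s ∈ comps (⊥ : SimpleGraph V), s.card = 1 := by
    intro s hs
    obtain ⟨v, rfl, -⟩ := comps_nonempty_elt hs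
    have : compSet (⊥ : SimpleGraph V) v = {v} := by
      ext w
      simp [mem_compSet, reachable_bot, eq_comm]
    rw [this, Finset.card_singleton]
  have h2 := sum_comps_card (⊥ : SimpleGraph V)
  rw [Finset.sum_congr rfl h1, Finset.sum_const, smul_eq_mul, mul_one] at h2
  exact h2

/-- A forest with `c` components on `n` vertices has `n - c` edges. -/
lemma card_edgeFinset_forest {G : SimpleGraph V} (hG : G.IsAcyclic) :
    G.edgeSet.ncard + (comps G).card = Fintype.card V := by
  generalize hk : G.edgeSet.ncard = k
  induction k generalizing G with
  | zero =>
    have hempty : G.edgeSet = ∅ := (Set.ncard_eq_zero G.edgeSet.toFinite).mp hk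
    rw [edgeSet_eq_empty] at hempty
    subst hempty
    rw [comps_card_bot]
    omega
  | succ k ih =>
    have hex : ∃ u v, G.Adj u v := by
      have hne : G.edgeSet.Nonempty := by
        rw [Set.nonempty_iff_ne_empty]
        intro h
        rw [h, Set.ncard_empty] at hk
        omega
      obtain ⟨e, he⟩ := hne
      induction e using Sym2.ind with
      | _ x y => exact ⟨x, y, he⟩
    obtain ⟨u, v, huv⟩ := hex
    have hle : G \ fromEdgeSet {s(u, v)} ≤ G := sdiff_le
    have hG' : (G \ fromEdgeSet {s(u, v)}).IsAcyclic := isAcyclic_anti hle hG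
    have hbr : ¬(G \ fromEdgeSet {s(u, v)}).Reachable u v :=
      ((isBridge_iff).mp ((isAcyclic_iff_forall_adj_isBridge).mp hG huv))
    have hecard : (G \ fromEdgeSet {s(u, v)}).edgeSet.ncard = k := by
      rw [edgeSet_sdiff_singleton, Set.ncard_diff_singleton_of_mem ((mem_edgeSet G).mpr huv), hk]
      omega
    have hcc : (comps G).card + 1 = (comps (G \ fromEdgeSet {s(u, v)})).card := by
      have := comps_card_sup_eg (G := G \ fromEdgeSet {s(u, v)}) hbr
      rwa [sdiff_sup_eg huv] at this
    have := ih hG' hecard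
    omega

lemma adj_of_reachable_of_le {G T : SimpleGraph V} (hT : T.IsAcyclic) (hle : G ≤ T)
    {u v : V} (ha : T.Adj u v) (hr : G.Reachable u v) : G.Adj u v := by
  have hb : ¬(T \ fromEdgeSet {s(u, v)}).Reachable u v :=
    ((isBridge_iff).mp ((isAcyclic_iff_forall_adj_isBridge).mp hT ha))
  obtain ⟨p⟩ := hr
  by_cases he : s(u, v) ∈ p.edges
  · exact (mem_edgeSet G).mp (p.edges_subset_edgeSet he)
  · exfalso
    refine hb ⟨p.transfer _ ?_⟩
    intro e hep
    rw [edgeSet_sdiff_singleton, Set.mem_diff, Set.mem_singleton_iff]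
    exact ⟨edgeSet_mono hle (p.edges_subset_edgeSet hep),
      fun h => he (h ▸ hep)⟩

lemma card_tree_pairs {G T : SimpleGraph V} (hG : G.IsAcyclic) (hle : G ≤ T)
    (hTc : T.Connected) (hTa : T.IsAcyclic) :
    (Finset.univ.filter (fun p : V × V => T.Adj p.1 p.2 ∧ ¬G.Reachable p.1 p.2)).card =
      2 * ((comps G).card - 1) := by
  have hfe : (Finset.univ.filter (fun p : V × V => T.Adj p.1 p.2 ∧ ¬G.Reachable p.1 p.2)) =
      (Finset.univ.filter (fun p : V × V => (T \ G).Adj p.1 p.2)) := by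
    ext p
    simp only [Finset.mem_filter, Finset.mem_univ, true_and, sdiff_adj]
    constructor
    · rintro ⟨h1, h2⟩
      exact ⟨h1, fun h => h2 h.reachable⟩
    · rintro ⟨h1, h2⟩
      exact ⟨h1, fun h => h2 (adj_of_reachable_of_le hTa hle h1 h)⟩
  rw [hfe, ← two_mul_card_edgeFinset]
  have h1 : (T \ G).edgeSet.ncard + G.edgeSet.ncard = T.edgeSet.ncard := by
    rw [edgeSet_sdiff]
    rw [Set.ncard_diff (edgeSet_mono hle)]
    have hsub := Set.ncard_le_ncard (edgeSet_mono hle) T.edgeSet.toFinite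
    omega
  have h2 : T.edgeSet.ncard + 1 = Fintype.card V := by
    rw [← ncard_edgeSet]
    exact IsTree.card_edgeFinset ⟨hTc, hTa⟩
  have h3 := card_edgeFinset_forest hG
  have h5 : 1 ≤ (comps G).card := by
    obtain ⟨v⟩ := hTc.nonempty
    exact Finset.card_pos.mpr ⟨compSet G v, compSet_mem_comps G v⟩
  rw [ncard_edgeSet]
  omega

end Count


open scoped Classical

section NT

variable {V : Type*} [Fintype V] [DecidableEq V]

/-- The number of spanning trees containing `G`. -/
noncomputable def NT (G : SimpleGraph V) : ℕ :=
  Nat.card {T : SimpleGraph V // G ≤ T ∧ T.Connected ∧ T.IsAcyclic}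

lemma NT_eq_filter_card (G : SimpleGraph V) :
    NT G = (Finset.univ.filter
      (fun T : SimpleGraph V => G ≤ T ∧ T.Connected ∧ T.IsAcyclic)).card := by
  rw [NT, Nat.card_eq_fintype_card, Fintype.card_subtype]

lemma eg_le_iff {T : SimpleGraph V} {u v : V} (hne : u ≠ v) :
    eg u v ≤ T ↔ T.Adj u v := by
  constructor
  · intro h
    exact h (eg_adj.mpr ⟨rfl, hne⟩)
  · intro h x y hxy
    obtain ⟨he, -⟩ := eg_adj.mp hxy
    rw [Sym2.eq_iff] at he
    rcases he with ⟨rfl, rfl⟩ | ⟨rfl, rfl⟩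
    · exact h
    · exact h.symm

lemma NT_sup_eg_eq {G : SimpleGraph V} {u v : V} (hne : u ≠ v) :
    NT (G ⊔ eg u v) = ((Finset.univ.filter
      (fun T : SimpleGraph V => G ≤ T ∧ T.Connected ∧ T.IsAcyclic)).filter
      (fun T => T.Adj u v)).card := by
  rw [NT_eq_filter_card, Finset.filter_filter]
  congr 1
  ext T
  simp only [Finset.mem_filter, Finset.mem_univ, true_and, sup_le_iff, eg_le_iff hne]
  tauto

/-- Double counting pairs `(e, T)`. -/
lemma sum_NT (G : SimpleGraph V) (hG : G.IsAcyclic) :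
    ∑ p ∈ Finset.univ.filter (fun p : V × V => ¬G.Reachable p.1 p.2),
        NT (G ⊔ eg p.1 p.2)
      = NT G * (2 * ((comps G).card - 1)) := by
  have hP : ∀ p : V × V, ¬G.Reachable p.1 p.2 → p.1 ≠ p.2 := by
    intro p h hh
    exact h (hh ▸ Reachable.refl _)
  rw [Finset.sum_congr rfl (fun p hp => NT_sup_eg_eq (hP p (Finset.mem_filter.mp hp).2))]
  rw [Finset.sum_congr rfl (fun p _ => Finset.card_filter _ _)]
  rw [Finset.sum_comm]
  have hinner : ∀ T ∈ Finset.univ.filter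
      (fun T : SimpleGraph V => G ≤ T ∧ T.Connected ∧ T.IsAcyclic),
      (∑ p ∈ Finset.univ.filter (fun p : V × V => ¬G.Reachable p.1 p.2),
        if T.Adj p.1 p.2 then 1 else 0) = 2 * ((comps G).card - 1) := by
    intro T hT
    have hT' := Finset.mem_filter.mp hT
    obtain ⟨hle, hTc, hTa⟩ := hT'.2
    rw [← Finset.card_filter, Finset.filter_filter]
    rw [← card_tree_pairs hG hle hTc hTa]
    congr 1
    ext p
    simp only [Finset.mem_filter, Finset.mem_univ, true_and]
    tauto
  rw [Finset.sum_congr rfl hinner, Finset.sum_const, smul_eq_mul, ← NT_eq_filter_card]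

end NT


open scoped Classical

section Formula

variable {V : Type*} [Fintype V] [DecidableEq V]

lemma fiber_compSet {G : SimpleGraph V} {s : Finset V} (hs : s ∈ comps G) :
    Finset.univ.filter (fun v => compSet G v = s) = s := by
  obtain ⟨v, rfl, -⟩ := comps_nonempty_elt hs
  ext w
  simp only [Finset.mem_filter, Finset.mem_univ, true_and]
  rw [eq_comm, ← mem_compSet_iff_eq]

/-- The generalized Cayley formula: the number of spanning trees of the complete
graph containing a given spanning forest `G` with components `c₁, …, c_k` is
`n^(k-2) * ∏ |cᵢ|` (stated here multiplied by `n` to avoid negative exponents). -/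
theorem NT_formula [Nonempty V] {G : SimpleGraph V} (hG : G.IsAcyclic) :
    (NT G : ℝ) * (Fintype.card V : ℝ) =
      (Fintype.card V : ℝ) ^ ((comps G).card - 1) * ∏ s ∈ comps G, (s.card : ℝ) := by
  generalize hc : (comps G).card = m
  induction m generalizing G with
  | zero =>
    exfalso
    obtain ⟨v⟩ := ‹Nonempty V›
    have := Finset.card_pos.mpr ⟨compSet G v, compSet_mem_comps G v⟩
    omega
  | succ k ih =>
    rcases Nat.eq_zero_or_pos k with rfl | hk
    · -- base case: G is connected, hence a spanning tree itself
      obtain ⟨s, hs⟩ := Finset.card_eq_one.mp hc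
      have hconn : G.Connected := by
        rw [connected_iff]
        refine ⟨fun u v => ?_, ‹Nonempty V›⟩
        have hu : compSet G u ∈ comps G := compSet_mem_comps G u
        have hv : compSet G v ∈ comps G := compSet_mem_comps G v
        rw [hs, Finset.mem_singleton] at hu hv
        exact compSet_eq_iff.mp (hu.trans hv.symm)
      have hNT : NT G = 1 := by
        rw [NT_eq_filter_card]
        have : Finset.univ.filter
            (fun T : SimpleGraph V => G ≤ T ∧ T.Connected ∧ T.IsAcyclic) = {G} := by
          ext T
          simp only [Finset.mem_filter, Finset.mem_univ, true_and, Finset.mem_singleton]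
          constructor
          · rintro ⟨hle, -, hTa⟩
            exact le_antisymm (fun x y hxy =>
              adj_of_reachable_of_le hTa hle hxy (hconn.preconnected x y)) hle
          · rintro rfl
            exact ⟨le_refl _, hconn, hG⟩
        rw [this, Finset.card_singleton]
      have hcard : (s.card : ℝ) = (Fintype.card V : ℝ) := by
        have := sum_comps_card G
        rw [hs, Finset.sum_singleton] at this
        exact_mod_cast congrArg Nat.cast this
      rw [hNT, hs, Finset.prod_singleton, hcard]
      simp
    · -- inductive step
      set n := Fintype.card V with hn
      have hn1 : 1 ≤ n := Fintype.card_pos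
      have hnR : (0 : ℝ) < n := by exact_mod_cast hn1
      set P := Finset.univ.filter (fun p : V × V => ¬G.Reachable p.1 p.2) with hP
      -- the formula for each augmented graph
      have hstep : ∀ p ∈ P, (NT (G ⊔ eg p.1 p.2) : ℝ) * n =
          (n : ℝ) ^ (k - 1) * ((∏ s ∈ comps G, (s.card : ℝ)) *
            (((compSet G p.1).card + (compSet G p.2).card : ℝ) /
              ((compSet G p.1).card * (compSet G p.2).card))) := by
        rintro p hp
        have hur : ¬G.Reachable p.1 p.2 := (Finset.mem_filter.mp hp).2
        have hacy : (G ⊔ eg p.1 p.2).IsAcyclic := isAcyclic_sup_eg hG hur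
        have hcc : (comps (G ⊔ eg p.1 p.2)).card = k := by
          have := comps_card_sup_eg hur
          omega
        have hprod := prod_comps_sup_eg hur
        have hc1 : (0 : ℝ) < (compSet G p.1).card := by
          exact_mod_cast card_compSet_pos (compSet_mem_comps G p.1)
        have hc2 : (0 : ℝ) < (compSet G p.2).card := by
          exact_mod_cast card_compSet_pos (compSet_mem_comps G p.2)
        have hprodR : (∏ s ∈ comps (G ⊔ eg p.1 p.2), (s.card : ℝ)) =
            (∏ s ∈ comps G, (s.card : ℝ)) *
              (((compSet G p.1).card + (compSet G p.2).card : ℝ) /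
                ((compSet G p.1).card * (compSet G p.2).card)) := by
          have := congrArg (Nat.cast : ℕ → ℝ) hprod
          push_cast at this
          field_simp
          linarith [this]
        rw [← hprodR, ← hcc]
        exact ih hacy hcc ▸ by rw [hcc]
      -- the sum over unreachable ordered pairs of `1/|C(p.1)|` etc.
      have hcardfilter : ∀ u : V,
          (Finset.univ.filter (fun v => ¬G.Reachable u v)).card = n - (compSet G u).card := by
        intro u
        have h := Finset.card_filter_add_card_filter_not
          (s := (Finset.univ : Finset V)) (p := fun v => G.Reachable u v)
        have h2 : compSet G u = Finset.univ.filter (fun v => G.Reachable u v) := by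
          ext w; simp [mem_compSet]
        rw [Finset.card_univ] at h
        rw [h2]
        omega
      have hinner1 : ∀ u : V,
          (∑ v : V, if ¬G.Reachable u v then (1 : ℝ) / ((compSet G u).card : ℝ) else 0) =
            ((n : ℝ) - ((compSet G u).card : ℝ)) * ((1 : ℝ) / ((compSet G u).card : ℝ)) := by
        intro u
        rw [← Finset.sum_filter, Finset.sum_const, nsmul_eq_mul, hcardfilter u]
        have hle : (compSet G u).card ≤ n := by
          rw [hn]; exact (Finset.card_le_univ _).trans (le_of_eq Finset.card_univ)
        rw [Nat.cast_sub hle]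
      have hS1 : (∑ p ∈ P, (1 : ℝ) / ((compSet G p.1).card : ℝ)) =
          ∑ u : V, ((n : ℝ) - ((compSet G u).card : ℝ)) * ((1 : ℝ) / ((compSet G u).card : ℝ)) := by
        rw [hP, Finset.sum_filter, Fintype.sum_prod_type]
        exact Finset.sum_congr rfl (fun u _ => hinner1 u)
      have hS2 : (∑ p ∈ P, (1 : ℝ) / ((compSet G p.2).card : ℝ)) =
          ∑ u : V, ((n : ℝ) - ((compSet G u).card : ℝ)) * ((1 : ℝ) / ((compSet G u).card : ℝ)) := by
        rw [hP, Finset.sum_filter, Fintype.sum_prod_type, Finset.sum_comm]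
        refine Finset.sum_congr rfl (fun v _ => ?_)
        rw [show (∑ u : V, if ¬G.Reachable u v then (1 : ℝ) / ((compSet G v).card : ℝ) else 0) =
            ∑ u : V, if ¬G.Reachable v u then (1 : ℝ) / ((compSet G v).card : ℝ) else 0 from
          Finset.sum_congr rfl (fun u _ => if_congr (not_congr reachable_comm) rfl rfl)]
        exact hinner1 v
      have hS3 : (∑ u : V, ((n : ℝ) - ((compSet G u).card : ℝ)) *
          ((1 : ℝ) / ((compSet G u).card : ℝ))) = (k : ℝ) * n := by
        rw [← Finset.sum_fiberwise_of_maps_to (g := compSet G) (t := comps G)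
          (fun x _ => compSet_mem_comps G x)]
        have hper : ∀ s ∈ comps G,
            (∑ u ∈ Finset.univ.filter (fun u => compSet G u = s),
              ((n : ℝ) - ((compSet G u).card : ℝ)) * ((1 : ℝ) / ((compSet G u).card : ℝ))) =
            (n : ℝ) - (s.card : ℝ) := by
          intro s hs
          rw [fiber_compSet hs]
          have hval : ∀ u ∈ s, ((n : ℝ) - ((compSet G u).card : ℝ)) *
              ((1 : ℝ) / ((compSet G u).card : ℝ)) =
              ((n : ℝ) - (s.card : ℝ)) * ((1 : ℝ) / (s.card : ℝ)) := by
            intro u hu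
            obtain ⟨v, rfl, -⟩ := comps_nonempty_elt hs
            rw [← mem_compSet_iff_eq.mp hu]
          rw [Finset.sum_congr rfl hval, Finset.sum_const, nsmul_eq_mul]
          have hspos : (0 : ℝ) < (s.card : ℝ) := by exact_mod_cast card_compSet_pos hs
          field_simp
        rw [Finset.sum_congr rfl hper, Finset.sum_sub_distrib, Finset.sum_const, nsmul_eq_mul,
          hc]
        have hsum : (∑ s ∈ comps G, (s.card : ℝ)) = (n : ℝ) := by
          rw [← Nat.cast_sum]
          exact_mod_cast congrArg (Nat.cast : ℕ → ℝ) (sum_comps_card G)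
        rw [hsum]
        push_cast
        ring
      have hS : (∑ p ∈ P, (((compSet G p.1).card + (compSet G p.2).card : ℝ) /
            (((compSet G p.1).card : ℝ) * ((compSet G p.2).card : ℝ)))) =
          2 * (k : ℝ) * n := by
        have hsplit : ∀ p ∈ P, (((compSet G p.1).card + (compSet G p.2).card : ℝ) /
            (((compSet G p.1).card : ℝ) * ((compSet G p.2).card : ℝ))) =
            (1 : ℝ) / ((compSet G p.1).card : ℝ) + (1 : ℝ) / ((compSet G p.2).card : ℝ) := by
          intro p _
          have hc1 : (0 : ℝ) < ((compSet G p.1).card : ℝ) := by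
            exact_mod_cast card_compSet_pos (compSet_mem_comps G p.1)
          have hc2 : (0 : ℝ) < ((compSet G p.2).card : ℝ) := by
            exact_mod_cast card_compSet_pos (compSet_mem_comps G p.2)
          field_simp
          ring
        rw [Finset.sum_congr rfl hsplit, Finset.sum_add_distrib, hS1, hS2, hS3]
        ring
      -- cast the double counting identity
      have hsumR : (∑ p ∈ P, (NT (G ⊔ eg p.1 p.2) : ℝ)) = (NT G : ℝ) * (2 * (k : ℝ)) := by
        have := sum_NT G hG
        rw [hc] at this
        have h2 : k + 1 - 1 = k := rfl
        rw [h2] at this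
        rw [← hP] at this
        exact_mod_cast congrArg (Nat.cast : ℕ → ℝ) this
      -- assemble
      have E : (NT G : ℝ) * (2 * (k : ℝ)) * n =
          (n : ℝ) ^ (k - 1) * (∏ s ∈ comps G, (s.card : ℝ)) * (2 * (k : ℝ) * n) := by
        calc (NT G : ℝ) * (2 * (k : ℝ)) * n
            = (∑ p ∈ P, (NT (G ⊔ eg p.1 p.2) : ℝ)) * n := by rw [hsumR]
          _ = ∑ p ∈ P, (NT (G ⊔ eg p.1 p.2) : ℝ) * n := by rw [Finset.sum_mul]
          _ = ∑ p ∈ P, (n : ℝ) ^ (k - 1) * ((∏ s ∈ comps G, (s.card : ℝ)) *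
                (((compSet G p.1).card + (compSet G p.2).card : ℝ) /
                  (((compSet G p.1).card : ℝ) * ((compSet G p.2).card : ℝ)))) :=
              Finset.sum_congr rfl hstep
          _ = (n : ℝ) ^ (k - 1) * ((∏ s ∈ comps G, (s.card : ℝ)) *
                (∑ p ∈ P, (((compSet G p.1).card + (compSet G p.2).card : ℝ) /
                  (((compSet G p.1).card : ℝ) * ((compSet G p.2).card : ℝ))))) := by
              rw [← Finset.mul_sum, ← Finset.mul_sum]
          _ = (n : ℝ) ^ (k - 1) * (∏ s ∈ comps G, (s.card : ℝ)) * (2 * (k : ℝ) * n) := by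
              rw [hS]; ring
      have h2k : (2 * (k : ℝ)) ≠ 0 := by
        have : (0 : ℝ) < (k : ℝ) := by exact_mod_cast hk
        positivity
      have hpow : (n : ℝ) ^ (k - 1) * (n : ℝ) = (n : ℝ) ^ (k + 1 - 1) := by
        rw [← pow_succ]
        congr 1
        omega
      refine mul_right_cancel₀ h2k ?_
      calc (NT G : ℝ) * (n : ℝ) * (2 * (k : ℝ))
          = (NT G : ℝ) * (2 * (k : ℝ)) * n := by ring
        _ = (n : ℝ) ^ (k - 1) * (∏ s ∈ comps G, (s.card : ℝ)) * (2 * (k : ℝ) * n) := E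
        _ = ((n : ℝ) ^ (k - 1) * (n : ℝ)) * (∏ s ∈ comps G, (s.card : ℝ)) * (2 * (k : ℝ)) := by
            ring
        _ = (n : ℝ) ^ (k + 1 - 1) * (∏ s ∈ comps G, (s.card : ℝ)) * (2 * (k : ℝ)) := by
            rw [hpow]


end Formula


open scoped Classical

section Split

variable {V : Type*} [Fintype V] [DecidableEq V]

/-- Components of `G` whose representatives lie in `R`. -/
noncomputable def compsIn (G : SimpleGraph V) (R : Set V) : Finset (Finset V) :=
  (Finset.univ.filter (fun v => v ∈ R)).image (compSet G)

lemma comps_eq_compsIn_union (G : SimpleGraph V) (R : Set V) :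
    comps G = compsIn G R ∪ compsIn G Rᶜ := by
  ext s
  simp only [comps, compsIn, Finset.mem_union, Finset.mem_image, Finset.mem_filter,
    Finset.mem_univ, true_and]
  constructor
  · rintro ⟨v, rfl⟩
    by_cases h : v ∈ R
    · exact Or.inl ⟨v, h, rfl⟩
    · exact Or.inr ⟨v, h, rfl⟩
  · rintro (⟨v, -, rfl⟩ | ⟨v, -, rfl⟩) <;> exact ⟨v, rfl⟩

lemma compsIn_subset {G : SimpleGraph V} {R : Set V}
    (hR : ∀ ⦃x y⦄, G.Adj x y → x ∈ R → y ∈ R) {s : Finset V} (hs : s ∈ compsIn G R) :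
    ∀ x ∈ s, x ∈ R := by
  obtain ⟨v, hv, rfl⟩ := Finset.mem_image.mp hs
  rw [Finset.mem_filter] at hv
  intro x hx
  exact mem_closed_of_reachable hR hv.2 (mem_compSet.mp hx)

lemma compsIn_disjoint {G : SimpleGraph V} {R : Set V}
    (hR : ∀ ⦃x y⦄, G.Adj x y → x ∈ R → y ∈ R)
    (hR' : ∀ ⦃x y⦄, G.Adj x y → x ∈ Rᶜ → y ∈ Rᶜ) :
    Disjoint (compsIn G R) (compsIn G Rᶜ) := by
  rw [Finset.disjoint_left]
  intro s hs hs'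
  obtain ⟨v, -, rfl⟩ := Finset.mem_image.mp hs
  have hv := self_mem_compSet (G := G) v
  exact (compsIn_subset hR' hs' _ hv) (compsIn_subset hR hs _ hv)

lemma compsIn_congr {G₁ G₂ : SimpleGraph V} {R : Set V}
    (h : ∀ v ∈ R, compSet G₁ v = compSet G₂ v) :
    compsIn G₁ R = compsIn G₂ R := by
  unfold compsIn
  refine Finset.image_congr (fun v hv => ?_)
  rw [Finset.coe_filter] at hv
  exact h v hv.2

end Split

section Key

variable {V : Type*} [Fintype V] [DecidableEq V]
variable {F H₁ H₂ : SimpleGraph V}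

/-- The set of vertices in an `F`-component meeting the support of `H₂`. -/
def Red (F H₂ : SimpleGraph V) : Set V := {v | ∃ w ∈ H₂.support, F.Reachable v w}

variable (hdisj : ∀ u v : V, u ∈ H₁.support → v ∈ H₂.support → ¬ F.Reachable u v)

section WithDisj
include hdisj

lemma H₁_support_not_red : ∀ ⦃x⦄, x ∈ H₁.support → x ∉ Red F H₂ := by
  rintro x hx ⟨w, hw, hr⟩
  exact hdisj x w hx hw hr

lemma H₂_support_red : ∀ ⦃x⦄, x ∈ H₂.support → x ∈ Red F H₂ :=
  fun x hx => ⟨x, hx, Reachable.refl x⟩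

lemma red_closed_F : ∀ ⦃x y⦄, F.Adj x y → x ∈ Red F H₂ → y ∈ Red F H₂ := by
  rintro x y hxy ⟨w, hw, hr⟩
  exact ⟨w, hw, hxy.symm.reachable.trans hr⟩

lemma blue_closed_F : ∀ ⦃x y⦄, F.Adj x y → x ∉ Red F H₂ → y ∉ Red F H₂ := by
  intro x y hxy hx hy
  exact hx (red_closed_F hdisj hxy.symm hy)

lemma red_closed_FH₂ : ∀ ⦃x y⦄, (F ⊔ H₂).Adj x y → x ∈ Red F H₂ → y ∈ Red F H₂ := by
  intro x y hxy hx
  rcases (sup_adj _ _ _ _).mp hxy with h | h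
  · exact red_closed_F hdisj h hx
  · exact H₂_support_red hdisj ⟨x, h.symm⟩

lemma blue_closed_FH₂ : ∀ ⦃x y⦄, (F ⊔ H₂).Adj x y → x ∉ Red F H₂ → y ∉ Red F H₂ := by
  intro x y hxy hx
  rcases (sup_adj _ _ _ _).mp hxy with h | h
  · exact blue_closed_F hdisj h hx
  · exact absurd (H₂_support_red hdisj ⟨y, h⟩) hx

lemma red_closed_FH₁ : ∀ ⦃x y⦄, (F ⊔ H₁).Adj x y → x ∈ Red F H₂ → y ∈ Red F H₂ := by
  intro x y hxy hx
  rcases (sup_adj _ _ _ _).mp hxy with h | h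
  · exact red_closed_F hdisj h hx
  · exact absurd hx (H₁_support_not_red hdisj ⟨y, h⟩)

lemma blue_closed_FH₁ : ∀ ⦃x y⦄, (F ⊔ H₁).Adj x y → x ∉ Red F H₂ → y ∉ Red F H₂ := by
  intro x y hxy hx
  rcases (sup_adj _ _ _ _).mp hxy with h | h
  · exact blue_closed_F hdisj h hx
  · exact H₁_support_not_red hdisj ⟨x, h.symm⟩

lemma red_closed_all : ∀ ⦃x y⦄, (F ⊔ H₁ ⊔ H₂).Adj x y → x ∈ Red F H₂ → y ∈ Red F H₂ := by
  intro x y hxy hx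
  rcases (sup_adj _ _ _ _).mp hxy with h | h
  · exact red_closed_FH₁ hdisj h hx
  · exact H₂_support_red hdisj ⟨x, h.symm⟩

lemma blue_closed_all : ∀ ⦃x y⦄, (F ⊔ H₁ ⊔ H₂).Adj x y → x ∉ Red F H₂ → y ∉ Red F H₂ := by
  intro x y hxy hx
  rcases (sup_adj _ _ _ _).mp hxy with h | h
  · exact blue_closed_FH₁ hdisj h hx
  · exact absurd (H₂_support_red hdisj ⟨y, h⟩) hx

/-- On blue vertices the components of `F ⊔ H₁ ⊔ H₂` agree with those of `F ⊔ H₁`. -/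
lemma compSet_all_blue : ∀ v ∈ (Red F H₂)ᶜ,
    compSet (F ⊔ H₁ ⊔ H₂) v = compSet (F ⊔ H₁) v := by
  intro v hv
  ext w
  simp only [mem_compSet]
  exact reachable_sup_closed (blue_closed_FH₁ hdisj)
    (fun x hx hx' => hx' (H₂_support_red hdisj hx)) hv

lemma compSet_all_red : ∀ v ∈ Red F H₂,
    compSet (F ⊔ H₁ ⊔ H₂) v = compSet (F ⊔ H₂) v := by
  intro v hv
  ext w
  simp only [mem_compSet]
  rw [sup_right_comm]
  exact reachable_sup_closed (red_closed_FH₂ hdisj)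
    (fun x hx hx' => (H₁_support_not_red hdisj hx) hx') hv

lemma compSet_FH₂_blue : ∀ v ∈ (Red F H₂)ᶜ,
    compSet (F ⊔ H₂) v = compSet F v := by
  intro v hv
  ext w
  simp only [mem_compSet]
  exact reachable_sup_closed (blue_closed_F hdisj)
    (fun x hx hx' => hx' (H₂_support_red hdisj hx)) hv

lemma compSet_FH₁_red : ∀ v ∈ Red F H₂,
    compSet (F ⊔ H₁) v = compSet F v := by
  intro v hv
  ext w
  simp only [mem_compSet]
  exact reachable_sup_closed (red_closed_F hdisj)
    (fun x hx hx' => (H₁_support_not_red hdisj hx) hx') hv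

/-- The component multiset identity. -/
lemma key_comps_card :
    (comps (F ⊔ H₁ ⊔ H₂)).card + (comps F).card =
      (comps (F ⊔ H₁)).card + (comps (F ⊔ H₂)).card := by
  have e12 := comps_eq_compsIn_union (F ⊔ H₁ ⊔ H₂) (Red F H₂)
  have e0 := comps_eq_compsIn_union F (Red F H₂)
  have e1 := comps_eq_compsIn_union (F ⊔ H₁) (Red F H₂)
  have e2 := comps_eq_compsIn_union (F ⊔ H₂) (Red F H₂)
  rw [e12, e0, e1, e2,
    Finset.card_union_of_disjoint (compsIn_disjoint (red_closed_all hdisj) (blue_closed_all hdisj)),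
    Finset.card_union_of_disjoint (compsIn_disjoint (red_closed_F hdisj) (blue_closed_F hdisj)),
    Finset.card_union_of_disjoint (compsIn_disjoint (red_closed_FH₁ hdisj) (blue_closed_FH₁ hdisj)),
    Finset.card_union_of_disjoint (compsIn_disjoint (red_closed_FH₂ hdisj) (blue_closed_FH₂ hdisj)),
    compsIn_congr (compSet_all_red hdisj), compsIn_congr (compSet_all_blue hdisj),
    compsIn_congr (compSet_FH₁_red hdisj), compsIn_congr (compSet_FH₂_blue hdisj)]
  ring

lemma key_comps_prod :
    (∏ s ∈ comps (F ⊔ H₁ ⊔ H₂), (s.card : ℝ)) * (∏ s ∈ comps F, (s.card : ℝ)) =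
      (∏ s ∈ comps (F ⊔ H₁), (s.card : ℝ)) * (∏ s ∈ comps (F ⊔ H₂), (s.card : ℝ)) := by
  have e12 := comps_eq_compsIn_union (F ⊔ H₁ ⊔ H₂) (Red F H₂)
  have e0 := comps_eq_compsIn_union F (Red F H₂)
  have e1 := comps_eq_compsIn_union (F ⊔ H₁) (Red F H₂)
  have e2 := comps_eq_compsIn_union (F ⊔ H₂) (Red F H₂)
  rw [e12, e0, e1, e2,
    Finset.prod_union (compsIn_disjoint (red_closed_all hdisj) (blue_closed_all hdisj)),
    Finset.prod_union (compsIn_disjoint (red_closed_F hdisj) (blue_closed_F hdisj)),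
    Finset.prod_union (compsIn_disjoint (red_closed_FH₁ hdisj) (blue_closed_FH₁ hdisj)),
    Finset.prod_union (compsIn_disjoint (red_closed_FH₂ hdisj) (blue_closed_FH₂ hdisj)),
    compsIn_congr (compSet_all_red hdisj), compsIn_congr (compSet_all_blue hdisj),
    compsIn_congr (compSet_FH₁_red hdisj), compsIn_congr (compSet_FH₂_blue hdisj)]
  ring

/-- Acyclicity combines. -/
lemma key_acyclic (h1 : (F ⊔ H₁).IsAcyclic) (h2 : (F ⊔ H₂).IsAcyclic) :
    (F ⊔ H₁ ⊔ H₂).IsAcyclic := by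
  intro v c hc
  by_cases hv : v ∈ Red F H₂
  · have hsub : ∀ e ∈ c.edges, e ∈ (F ⊔ H₂ ⊔ H₁).edgeSet := by
      intro e he
      have := c.edges_subset_edgeSet he
      rwa [sup_right_comm] at this
    exact acyclic_sup_closed (red_closed_FH₂ hdisj)
      (fun x hx hx' => (H₁_support_not_red hdisj hx) hx') h2 hv
      (c.transfer _ hsub) (hc.transfer _)
  · exact acyclic_sup_closed (blue_closed_FH₁ hdisj)
      (fun x hx hx' => hx' (H₂_support_red hdisj hx)) h1 hv c hc

end WithDisj
end Key


open scoped Classical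

section Final

variable {V : Type*} [Fintype V] [DecidableEq V]

lemma NT_card_eq₂ (F H₁ : SimpleGraph V) :
    Nat.card {T : SimpleGraph V // F ≤ T ∧ H₁ ≤ T ∧ T.Connected ∧ T.IsAcyclic} =
      NT (F ⊔ H₁) := by
  rw [NT]
  refine Nat.card_congr (Equiv.subtypeEquivRight (fun T => ?_))
  rw [sup_le_iff]
  tauto

lemma NT_card_eq₃ (F H₁ H₂ : SimpleGraph V) :
    Nat.card {T : SimpleGraph V //
        F ≤ T ∧ H₁ ≤ T ∧ H₂ ≤ T ∧ T.Connected ∧ T.IsAcyclic} =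
      NT (F ⊔ H₁ ⊔ H₂) := by
  rw [NT]
  refine Nat.card_congr (Equiv.subtypeEquivRight (fun T => ?_))
  rw [sup_le_iff, sup_le_iff]
  tauto

lemma NT_pos [Nonempty V] {G : SimpleGraph V} (hG : G.IsAcyclic) : (0 : ℝ) < (NT G : ℝ) := by
  have hform := NT_formula hG
  have hN : (0 : ℝ) < (Fintype.card V : ℝ) := by exact_mod_cast Fintype.card_pos
  have hp : (0 : ℝ) < ∏ s ∈ comps G, (s.card : ℝ) := by
    refine Finset.prod_pos (fun s hs => ?_)
    exact_mod_cast card_compSet_pos hs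
  have : (0 : ℝ) < (NT G : ℝ) * (Fintype.card V : ℝ) := by
    rw [hform]
    positivity
  nlinarith

lemma NT_zero_of_not_acyclic {G G' : SimpleGraph V} (hle : G ≤ G') (hG : ¬G.IsAcyclic)
    {H : SimpleGraph V} (hH : G' ≤ H → True) : True := trivial

lemma comps_card_pos [Nonempty V] (G : SimpleGraph V) : 0 < (comps G).card := by
  obtain ⟨v⟩ := ‹Nonempty V›
  exact Finset.card_pos.mpr ⟨compSet G v, compSet_mem_comps G v⟩

/-- The main independence identity in terms of `NT`. -/
theorem main_identity [Nonempty V] {F H₁ H₂ : SimpleGraph V}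
    (h1 : (F ⊔ H₁).IsAcyclic) (h2 : (F ⊔ H₂).IsAcyclic)
    (hdisj : ∀ u v : V, u ∈ H₁.support → v ∈ H₂.support → ¬ F.Reachable u v) :
    (NT (F ⊔ H₁ ⊔ H₂) : ℝ) * (NT F : ℝ) = (NT (F ⊔ H₁) : ℝ) * (NT (F ⊔ H₂) : ℝ) := by
  have hF : F.IsAcyclic := isAcyclic_anti le_sup_left h1
  have h12 : (F ⊔ H₁ ⊔ H₂).IsAcyclic := key_acyclic hdisj h1 h2
  set N := (Fintype.card V : ℝ) with hN
  have hNpos : (0 : ℝ) < N := by rw [hN]; exact_mod_cast Fintype.card_pos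
  have f0 := NT_formula hF
  have fa := NT_formula h1
  have fb := NT_formula h2
  have fab := NT_formula h12
  have hcards := key_comps_card hdisj (H₁ := H₁) (H₂ := H₂)
  have hprods := key_comps_prod hdisj (H₁ := H₁) (H₂ := H₂)
  have c0 := comps_card_pos (V := V) F
  have ca := comps_card_pos (V := V) (F ⊔ H₁)
  have cb := comps_card_pos (V := V) (F ⊔ H₂)
  have cab := comps_card_pos (V := V) (F ⊔ H₁ ⊔ H₂)
  have hexp : ((comps (F ⊔ H₁ ⊔ H₂)).card - 1) + ((comps F).card - 1) =
      ((comps (F ⊔ H₁)).card - 1) + ((comps (F ⊔ H₂)).card - 1) := by omega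
  have E : ((NT (F ⊔ H₁ ⊔ H₂) : ℝ) * N) * ((NT F : ℝ) * N) =
      ((NT (F ⊔ H₁) : ℝ) * N) * ((NT (F ⊔ H₂) : ℝ) * N) := by
    rw [f0, fa, fb, fab]
    calc N ^ ((comps (F ⊔ H₁ ⊔ H₂)).card - 1) * (∏ s ∈ comps (F ⊔ H₁ ⊔ H₂), (s.card : ℝ)) *
          (N ^ ((comps F).card - 1) * (∏ s ∈ comps F, (s.card : ℝ)))
        = N ^ (((comps (F ⊔ H₁ ⊔ H₂)).card - 1) + ((comps F).card - 1)) *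
            ((∏ s ∈ comps (F ⊔ H₁ ⊔ H₂), (s.card : ℝ)) * (∏ s ∈ comps F, (s.card : ℝ))) := by
          rw [pow_add]; ring
      _ = N ^ (((comps (F ⊔ H₁)).card - 1) + ((comps (F ⊔ H₂)).card - 1)) *
            ((∏ s ∈ comps (F ⊔ H₁), (s.card : ℝ)) * (∏ s ∈ comps (F ⊔ H₂), (s.card : ℝ))) := by
          rw [hexp, hprods]
      _ = N ^ ((comps (F ⊔ H₁)).card - 1) * (∏ s ∈ comps (F ⊔ H₁), (s.card : ℝ)) *
            (N ^ ((comps (F ⊔ H₂)).card - 1) * (∏ s ∈ comps (F ⊔ H₂), (s.card : ℝ))) := by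
          rw [pow_add]; ring
  have hNN : N * N ≠ 0 := by positivity
  have := mul_right_cancel₀ hNN (by linarith [E] :
    ((NT (F ⊔ H₁ ⊔ H₂) : ℝ) * (NT F : ℝ)) * (N * N) =
      ((NT (F ⊔ H₁) : ℝ) * (NT (F ⊔ H₂) : ℝ)) * (N * N))
  exact this

end Final

end ForestIndep

open ForestIndep

/-- If `H₁` and `H₂` are `F`-disjoint forests, then for `T` uniformly random among
spanning trees containing the spanning forest `F`, the events `H₁ ⊆ T` and `H₂ ⊆ T`
are independent. -/
theorem F_disjoint_independent (n : ℕ)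
    (F H₁ H₂ : SimpleGraph (Fin n)) (hF : F.IsAcyclic)
    (hH₁ : H₁.IsAcyclic) (hH₂ : H₂.IsAcyclic)
    (hdisj : ∀ u v : Fin n, u ∈ H₁.support → v ∈ H₂.support → ¬ F.Reachable u v) :
    (Nat.card {T : SimpleGraph (Fin n) //
        F ≤ T ∧ H₁ ≤ T ∧ H₂ ≤ T ∧ T.Connected ∧ T.IsAcyclic} : ℝ) /
      (Nat.card {T : SimpleGraph (Fin n) // F ≤ T ∧ T.Connected ∧ T.IsAcyclic} : ℝ) =
    ((Nat.card {T : SimpleGraph (Fin n) //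
        F ≤ T ∧ H₁ ≤ T ∧ T.Connected ∧ T.IsAcyclic} : ℝ) /
      (Nat.card {T : SimpleGraph (Fin n) // F ≤ T ∧ T.Connected ∧ T.IsAcyclic} : ℝ)) *
    ((Nat.card {T : SimpleGraph (Fin n) //
        F ≤ T ∧ H₂ ≤ T ∧ T.Connected ∧ T.IsAcyclic} : ℝ) /
      (Nat.card {T : SimpleGraph (Fin n) // F ≤ T ∧ T.Connected ∧ T.IsAcyclic} : ℝ)) := by
  rcases Nat.eq_zero_or_pos n with rfl | hn
  · -- no graphs on zero vertices are connected
    have e0 : IsEmpty {T : SimpleGraph (Fin 0) // F ≤ T ∧ T.Connected ∧ T.IsAcyclic} := by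
      constructor
      rintro ⟨T, -, hc, -⟩
      exact hc.nonempty.elim (fun v => v.elim0)
    have e1 : IsEmpty {T : SimpleGraph (Fin 0) //
        F ≤ T ∧ H₁ ≤ T ∧ H₂ ≤ T ∧ T.Connected ∧ T.IsAcyclic} := by
      constructor
      rintro ⟨T, -, -, -, hc, -⟩
      exact hc.nonempty.elim (fun v => v.elim0)
    rw [Nat.card_of_isEmpty (α := {T : SimpleGraph (Fin 0) //
        F ≤ T ∧ T.Connected ∧ T.IsAcyclic})]
    rw [Nat.card_of_isEmpty (α := {T : SimpleGraph (Fin 0) //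
        F ≤ T ∧ H₁ ≤ T ∧ H₂ ≤ T ∧ T.Connected ∧ T.IsAcyclic})]
    norm_num
  · haveI : Nonempty (Fin n) := ⟨⟨0, hn⟩⟩
    have hcard1 : Nat.card {T : SimpleGraph (Fin n) // F ≤ T ∧ T.Connected ∧ T.IsAcyclic} =
        NT F := rfl
    rw [hcard1, NT_card_eq₂ F H₁, NT_card_eq₂ F H₂, NT_card_eq₃ F H₁ H₂]
    by_cases hA1 : (F ⊔ H₁).IsAcyclic
    · by_cases hA2 : (F ⊔ H₂).IsAcyclic
      · have dac := main_identity hA1 hA2 hdisj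
        have ha : (0 : ℝ) < (NT F : ℝ) := NT_pos hF
        have ha' : (NT F : ℝ) ≠ 0 := ne_of_gt ha
        rw [div_mul_div_comm, div_eq_div_iff ha' (mul_ne_zero ha' ha')]
        linear_combination (NT F : ℝ) * dac
      · have hb : NT (F ⊔ H₂) = 0 := by
          rw [NT]
          haveI : IsEmpty {T : SimpleGraph (Fin n) //
              F ⊔ H₂ ≤ T ∧ T.Connected ∧ T.IsAcyclic} :=
            ⟨fun x => hA2 (isAcyclic_anti x.2.1 x.2.2.2)⟩
          exact Nat.card_of_isEmpty
        have hd : NT (F ⊔ H₁ ⊔ H₂) = 0 := by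
          rw [NT]
          haveI : IsEmpty {T : SimpleGraph (Fin n) //
              F ⊔ H₁ ⊔ H₂ ≤ T ∧ T.Connected ∧ T.IsAcyclic} :=
            ⟨fun x => hA2 (isAcyclic_anti (le_trans
              (sup_le_sup le_sup_left (le_refl H₂)) x.2.1) x.2.2.2)⟩
          exact Nat.card_of_isEmpty
        rw [hb, hd]
        norm_num
    · have hb : NT (F ⊔ H₁) = 0 := by
        rw [NT]
        haveI : IsEmpty {T : SimpleGraph (Fin n) //
            F ⊔ H₁ ≤ T ∧ T.Connected ∧ T.IsAcyclic} :=
          ⟨fun x => hA1 (isAcyclic_anti x.2.1 x.2.2.2)⟩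
        exact Nat.card_of_isEmpty
      have hd : NT (F ⊔ H₁ ⊔ H₂) = 0 := by
        rw [NT]
        haveI : IsEmpty {T : SimpleGraph (Fin n) //
            F ⊔ H₁ ⊔ H₂ ≤ T ∧ T.Connected ∧ T.IsAcyclic} :=
          ⟨fun x => hA1 (isAcyclic_anti (le_trans le_sup_left x.2.1) x.2.2.2)⟩
        exact Nat.card_of_isEmpty
      rw [hb, hd]
      norm_num
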